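/- Let G = (Ξ, Σ, Δ) be a grammar in 2-normal form, b = w_1* … w_d* a bounded expression over Σ, and G^∩, G^⋈, ι as defined. For every X ∈ Ξ, 1 ≤ s ≤ x ≤ d, k > 0 and every control set Γ ⊆ (Δ^⋈)*: if L^{(k)}_{[q^{(s)}_1 X q^{(x)}_1]}(G^⋈) ⊆ L̂_{[q^{(s)}_1 X q^{(x)}_1]}(Γ, G^⋈), then L^{(k)}_{[q^{(s)}_1 X q^{(x)}_1]}(G^∩) ⊆ L̂_{[q^{(s)}_1 X q^{(x)}_1]}(ι^{−1}(Γ), G^∩), where ι^{−1}(Γ) = { δ ∈ (Δ^∩)* | ι(δ) ∈ Γ } and ι extends to control words letterwise. -/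

import Mathlib

namespace Paper

/-- A word over nonterminals `N` and terminals `T`. -/
abbrev Word (N T : Type) := List (N ⊕ T)

/-- A production of a grammar. -/
abbrev CProd (N T : Type) := N × Word N T

/-- A grammar, given by its set of productions. -/
structure CFG (N T : Type) where
  prods : Set (CProd N T)

variable {N T : Type}

/-- number of occurrences of nonterminals in a word -/
def ntCount (u : Word N T) : ℕ := (u.filter (fun s => s.isLeft)).length

/-- number of occurrences of terminals in a word -/
def tCount (u : Word N T) : ℕ := (u.filter (fun s => s.isRight)).length

/-- the result of applying production `p` at position `j` of `u` -/
def applyProd (p : CProd N T) (j : ℕ) (u : Word N T) : Word N T :=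
  u.take j ++ p.2 ++ u.drop (j + 1)

/-- `KSeq G k u γjs v`: a step sequence from `u` to `v` applying the indicated
productions at the indicated positions, in which every word (including `u`, `v`)
has at most `k` occurrences of nonterminals (`k = ⊤` places no restriction). -/
inductive KSeq (G : CFG N T) (k : ℕ∞) : Word N T → List (CProd N T × ℕ) → Word N T → Prop
  | refl (u : Word N T) : (ntCount u : ℕ∞) ≤ k → KSeq G k u [] u
  | step {u v : Word N T} {p : CProd N T} {j : ℕ} {rest : List (CProd N T × ℕ)} :
      (ntCount u : ℕ∞) ≤ k → p ∈ G.prods → u[j]? = some (Sum.inl p.1) →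
      KSeq G k (applyProd p j u) rest v → KSeq G k u ((p, j) :: rest) v

/-- words annotated with the index of the step at which each symbol occurrence appeared -/
abbrev AWord (N T : Type) := List ((N ⊕ T) × ℕ)

def strip (u : AWord N T) : Word N T := u.map Prod.fst

def ntCountA (u : AWord N T) : ℕ := (u.filter (fun s => s.1.isLeft)).length

def applyProdA (p : CProd N T) (j m : ℕ) (u : AWord N T) : AWord N T :=
  u.take j ++ p.2.map (fun s => (s, m)) ++ u.drop (j + 1)

/-- the depth-first condition: position `j` carries a maximal first-appearance
index among the nonterminal occurrences of `u` -/
def dfOK (u : AWord N T) (j : ℕ) : Prop :=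
  ∀ i x o, u[(i : ℕ)]? = some (Sum.inl x, o) → ∀ s oj, u[j]? = some (s, oj) → o ≤ oj

/-- `DFSeq G k m u γjs v`: a `k`-index depth-first step sequence on annotated words,
where `m` is the index (in the whole sequence) of the current word `u`. -/
inductive DFSeq (G : CFG N T) (k : ℕ∞) : ℕ → AWord N T → List (CProd N T × ℕ) → AWord N T → Prop
  | refl (m : ℕ) (u : AWord N T) : (ntCountA u : ℕ∞) ≤ k → DFSeq G k m u [] u
  | step {m : ℕ} {u v : AWord N T} {p : CProd N T} {j o : ℕ} {rest : List (CProd N T × ℕ)} :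
      (ntCountA u : ℕ∞) ≤ k → p ∈ G.prods → u[j]? = some (Sum.inl p.1, o) →
      dfOK u j →
      DFSeq G k (m + 1) (applyProdA p j (m + 1) u) rest v →
      DFSeq G k m u ((p, j) :: rest) v

/-- `u ⇒^γ v` by a `k`-index step sequence (positions existentially quantified). -/
def CtrlSeq (G : CFG N T) (k : ℕ∞) (u : Word N T) (γ : List (CProd N T)) (v : Word N T) : Prop :=
  ∃ js : List ℕ, js.length = γ.length ∧ KSeq G k u (γ.zip js) v

/-- annotate a word as an initial word of a step sequence -/
def annot (u : Word N T) : AWord N T := u.map (fun s => (s, 0))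

/-- `u ⇒^γ v` by a `k`-index depth-first step sequence starting at `u`. -/
def DFCtrlFrom (G : CFG N T) (k : ℕ∞) (u : Word N T) (γ : List (CProd N T)) (v : Word N T) :
    Prop :=
  ∃ (js : List ℕ) (va : AWord N T),
    js.length = γ.length ∧ DFSeq G k 0 (annot u) (γ.zip js) va ∧ strip va = v

/-- embedding of terminal words -/
def tw (w : List T) : Word N T := w.map Sum.inr

/-- the sentential word `u Y v` where `u, v` are terminal and `Y` is an optional nonterminal -/
def sent (u : List T) (Y : Option N) (v : List T) : Word N T :=
  tw u ++ (Y.elim [] (fun y => [Sum.inl y])) ++ tw v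

/-- `L^{(k)}_{X,Y}(G) = { u·v | X ⇒* u Y v by a k-index step sequence }`;
`Y = none` stands for `ε`. -/
def LKY (G : CFG N T) (k : ℕ∞) (X : N) (Y : Option N) : Set (List T) :=
  {w | ∃ u v γ, w = u ++ v ∧ CtrlSeq G k [Sum.inl X] γ (sent u Y v)}

/-- `L_X(G)` -/
def Lang (G : CFG N T) (X : N) : Set (List T) := LKY G ⊤ X none

/-- `L^{(k)}_X(G)` -/
def LangK (G : CFG N T) (k : ℕ) (X : N) : Set (List T) := LKY G (k : ℕ∞) X none

/-- `Γ^{df(k)}_{X,Y}(G)`: control words of `k`-index depth-first step sequences `X ⇒^γ u Y v`. -/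
def GammaDF (G : CFG N T) (k : ℕ) (X : N) (Y : Option N) : Set (List (CProd N T)) :=
  {γ | ∃ u v : List T, DFCtrlFrom G (k : ℕ∞) [Sum.inl X] γ (sent u Y v)}

/-- `L̂_{X,Y}(Γ, G)` -/
def LHat (G : CFG N T) (Γ : Set (List (CProd N T))) (X : N) (Y : Option N) : Set (List T) :=
  {w | ∃ u v, w = u ++ v ∧ ∃ γ ∈ Γ, CtrlSeq G ⊤ [Sum.inl X] γ (sent u Y v)}

/-- the language of the bounded expression `w₁* ⋯ w_d*` -/
def BLang {α : Type} : List (List α) → Set (List α)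
  | [] => {[]}
  | w :: ws => {u | ∃ (n : ℕ) (v : List α), v ∈ BLang ws ∧ u = (List.replicate n w).flatten ++ v}

/-- the words of a bounded expression must be nonempty -/
def IsBExpr {α : Type} (ws : List (List α)) : Prop := ∀ w ∈ ws, w ≠ []

/-- the language of the letter-bounded expression `a₁* ⋯ a_d*` -/
def letterLang {α : Type} (as : List α) : Set (List α) := BLang (as.map (fun a => [a]))

/-- the language `a_i* ⋯ a_j*` (0-indexed segment of `as` from `i` to `j` inclusive) -/
def segLang {α : Type} (as : List α) (i j : ℕ) : Set (List α) :=
  letterLang ((as.drop i).take (j - i + 1))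

end Paper

namespace Paper

variable {N T : Type}

/-- ranked words over the nonterminals -/
abbrev RW (N : Type) := List (N × ℕ)

/-- the set of rank values is downward closed (equivalently, of the form `{0, …, m}`
when nonempty) -/
def contiguousRanks (q : RW N) : Prop := ∀ p ∈ q, ∀ j ≤ p.2, ∃ x : N, (x, j) ∈ q

/-- vertices of the graph `A^{df(k)}_G` -/
def IsVertex (k : ℕ) (q : RW N) : Prop :=
  q.length ≤ k ∧ contiguousRanks q ∧ List.Pairwise (· ≤ ·) (q.map Prod.snd)

/-- `w↓Ξ` : projection of a word to its nonterminals -/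
def ntProj (w : Word N T) : List N := w.filterMap Sum.getLeft?

open Classical in
/-- the rank given to the nonterminals produced by a step rewriting a nonterminal
of maximal rank `i`, where `uv` is the rest of the ranked word -/
noncomputable def newRank (uv : RW N) (i : ℕ) : ℕ :=
  if uv = [] then 0 else if ∀ p ∈ uv, p.2 ≠ i then i else i + 1

/-- the edge relation of the graph `A^{df(k)}_G` -/
def Edge (G : CFG N T) (k : ℕ) (q : RW N) (p : CProd N T) (q' : RW N) : Prop :=
  p ∈ G.prods ∧ IsVertex k q ∧ IsVertex k q' ∧
  ∃ (u v : RW N) (i : ℕ), q = u ++ [(p.1, i)] ++ v ∧ (∀ x ∈ q, x.2 ≤ i) ∧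
    q' = u ++ v ++ (ntProj p.2).map (fun X => (X, newRank (u ++ v) i))

/-- paths in a labeled graph, recording the sequence of edge labels -/
inductive GPath {V E : Type} (edge : V → E → V → Prop) : V → List E → V → Prop
  | refl (v : V) : GPath edge v [] v
  | step {v v' v'' : V} {e : E} {es : List E} :
      edge v e v' → GPath edge v' es v'' → GPath edge v (e :: es) v''

/-- paths recording the successive vertices as well -/
inductive VPath {V E : Type} (edge : V → E → V → Prop) : V → List (E × V) → Prop
  | refl (v : V) : VPath edge v []
  | step {v v' : V} {e : E} {rest : List (E × V)} :
      edge v e v' → VPath edge v' rest → VPath edge v ((e, v') :: rest)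

/-- endpoint of a path starting at `q` -/
def pend {V E : Type} (q : V) (π : List (E × V)) : V := (π.map Prod.snd).getLastD q

/-- a path is acyclic iff it visits no vertex twice -/
def AcyclicFrom {V E : Type} (q : V) (π : List (E × V)) : Prop :=
  (q :: π.map Prod.snd).Nodup

/-- `Decomp edge q pairs fin` asserts that the path obtained by concatenating, in order,
the segments of `pairs` (each an acyclic segment followed by a cycle) and `fin` is a valid
path from `q`, alternating acyclic segments `ς_j` and cycles `θ_j`. -/
def Decomp {V E : Type} (edge : V → E → V → Prop) :
    V → List (List (E × V) × List (E × V)) → List (E × V) → Prop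
  | q, [], fin => VPath edge q fin ∧ AcyclicFrom q fin
  | q, (σ, θ) :: rest, fin =>
      VPath edge q σ ∧ AcyclicFrom q σ ∧
      VPath edge (pend q σ) θ ∧ pend (pend q σ) θ = pend q σ ∧
      Decomp edge (pend q σ) rest fin

/-- `|γ|_a`: total number of occurrences of the terminal `a` in the right-hand
sides of the productions of the control word `γ` -/
def projCnt {A : Type} [DecidableEq A] (γ : List (CProd N A)) (a : A) : ℕ :=
  ((γ.map (fun p => p.2)).flatten.filterMap Sum.getRight?).count a

/-- `proj(γ) = a₁^{|γ|_{a₁}} ⋯ a_s^{|γ|_{a_s}}` -/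
def projW {A : Type} [DecidableEq A] (as : List A) (γ : List (CProd N A)) : List A :=
  (as.map (fun a => List.replicate (projCnt γ a) a)).flatten

end Paper

namespace Paper

variable {N T : Type}

/-- a grammar is in 2-normal form -/
def TwoNF (G : CFG N T) : Prop := ∀ p ∈ G.prods, p.2.length ≤ 2

/-- states of the automaton/grammar `G^b`: `(s, i)` encodes `q^{(s+1)}_{i+1}`,
i.e. position `i` (0-indexed) inside the block `s` (0-indexed) -/
abbrev QB : Type := ℕ × ℕ

/-- `ℓ_s`: length of the `s`-th word of the bounded expression -/
def lenB (ws : List (List T)) (s : ℕ) : ℕ := (ws.getD s []).length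

/-- the `i`-th letter of the `s`-th word -/
def letterB (ws : List (List T)) (s i : ℕ) : Option T := (ws.getD s [])[i]?

/-- the productions of the grammar `G^b` generating the bounded expression `b` -/
def DeltaB (ws : List (List T)) : Set (CProd QB T) :=
  {p | (∃ s i a, s < ws.length ∧ i + 1 < lenB ws s ∧ letterB ws s i = some a ∧
          p = ((s, i), [Sum.inr a, Sum.inl (s, i + 1)]))
     ∨ (∃ s s' a, s ≤ s' ∧ s' < ws.length ∧
          letterB ws s (lenB ws s - 1) = some a ∧
          p = ((s, lenB ws s - 1), [Sum.inr a, Sum.inl (s', 0)]))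
     ∨ (∃ s, s < ws.length ∧ p = ((s, 0), ([] : Word QB T)))}

/-- the grammar `G^b` -/
def GB (ws : List (List T)) : CFG QB T := ⟨DeltaB ws⟩

/-- nonterminals `[q X q']` of the product grammar `G^∩` -/
abbrev NI (N : Type) : Type := QB × N × QB

/-- `q ∈ Ξ^b` -/
def ValidQ (ws : List (List T)) (q : QB) : Prop :=
  q.1 < ws.length ∧ q.2 < lenB ws q.1

/-- `[q X q'] ∈ Ξ^∩`: both states valid and blocks in order -/
def ValidNI (ws : List (List T)) (n : NI N) : Prop :=
  ValidQ ws n.1 ∧ ValidQ ws n.2.2 ∧ n.1.1 ≤ n.2.2.1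

/-- `q ⇒* w·q'` in `G^b` -/
def DerB (ws : List (List T)) (q : QB) (w : List T) (q' : QB) : Prop :=
  ∃ γ, CtrlSeq (GB ws) ⊤ [Sum.inl q] γ (tw w ++ [Sum.inl q'])

/-- the productions `Δ^∩` of the product grammar `G^∩` -/
def DeltaI (G : CFG N T) (ws : List (List T)) : Set (CProd (NI N) T) :=
  {pp | ∃ (q q' : QB) (X : N), ValidNI ws (q, X, q') ∧
     ((∃ w : List T, (X, tw w) ∈ G.prods ∧ DerB ws q w q' ∧
         pp = ((q, X, q'), tw w)) ∨
      (∃ Y : N, (X, [Sum.inl Y]) ∈ G.prods ∧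
         pp = ((q, X, q'), [Sum.inl ((q, Y, q') : NI N)])) ∨
      (∃ (a : T) (Y : N) (qm : QB), (X, [Sum.inr a, Sum.inl Y]) ∈ G.prods ∧
         ((q, [Sum.inr a, Sum.inl qm]) : CProd QB T) ∈ DeltaB ws ∧ ValidNI ws (qm, Y, q') ∧
         pp = ((q, X, q'), [Sum.inr a, Sum.inl ((qm, Y, q') : NI N)])) ∨
      (∃ (a : T) (Y : N) (qm : QB), (X, [Sum.inl Y, Sum.inr a]) ∈ G.prods ∧
         ((qm, [Sum.inr a, Sum.inl q']) : CProd QB T) ∈ DeltaB ws ∧ ValidNI ws (q, Y, qm) ∧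
         pp = ((q, X, q'), [Sum.inl ((q, Y, qm) : NI N), Sum.inr a])) ∨
      (∃ (Y Z : N) (qm : QB), (X, [Sum.inl Y, Sum.inl Z]) ∈ G.prods ∧
         ValidNI ws (q, Y, qm) ∧ ValidNI ws (qm, Z, q') ∧
         pp = ((q, X, q'), [Sum.inl ((q, Y, qm) : NI N), Sum.inl ((qm, Z, q') : NI N)])))}

/-- the product grammar `G^∩` -/
def GI (G : CFG N T) (ws : List (List T)) : CFG (NI N) T := ⟨DeltaI G ws⟩

/-- `ζ` on symbols -/
def zetaS : (NI N ⊕ T) → (N ⊕ T) := Sum.map (fun n => n.2.1) id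

/-- `ζ` on productions -/
def zetaP (p : CProd (NI N) T) : CProd N T := (p.1.2.1, p.2.map zetaS)

/-- `ζ` on control words -/
def zetaC (γ : List (CProd (NI N) T)) : List (CProd N T) := γ.map zetaP

/-- the intermediate state of the (unique, shortest) two-step run of `G^b` from the
left state of `h` to its right state; when the first step wraps, the least possible
intermediate block is chosen -/
noncomputable def iotaMid (ws : List (List T)) (h : NI N) (a b : T) : QB :=
  if h.1.2 + 1 < lenB ws h.1.1 then (h.1.1, h.1.2 + 1)
  else (sInf {y : ℕ | (((h.1.1, h.1.2), [Sum.inr a, Sum.inl ((y, 0) : QB)]) : CProd QB T) ∈ DeltaB ws ∧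
                (((y, 0), [Sum.inr b, Sum.inl (h.2.2 : QB)]) : CProd QB T) ∈ DeltaB ws}, 0)

/-- `ι` on right-hand sides: relabels terminals by the indices (0-indexed) of the
blocks of `b` completed by the corresponding moves of `G^b`; `h` is the head of the
production -/
noncomputable def iotaRhs (ws : List (List T)) (h : NI N) :
    Word (NI N) T → Word (NI N) ℕ
  | [] => []
  | [Sum.inr _] => if h.2.2.2 = 0 then [Sum.inr h.1.1] else []
  | [Sum.inr a, Sum.inr b] =>
      (if (iotaMid ws h a b).2 = 0 then [Sum.inr h.1.1] else []) ++
      (if h.2.2.2 = 0 then [Sum.inr (iotaMid ws h a b).1] else [])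
  | [Sum.inr _, Sum.inl m] => (if m.1.2 = 0 then [Sum.inr h.1.1] else []) ++ [Sum.inl m]
  | [Sum.inl m, Sum.inr _] => [Sum.inl m] ++ (if h.2.2.2 = 0 then [Sum.inr m.2.2.1] else [])
  | other => other.map (Sum.map id (fun _ => 0))

/-- the map `ι : Δ^∩ → Δ^⋈` -/
noncomputable def iota (ws : List (List T)) (p : CProd (NI N) T) : CProd (NI N) ℕ :=
  (p.1, iotaRhs ws p.1 p.2)

/-- the grammar `G^⋈`, whose terminals are the (0-indexed) letters `a₁, …, a_d`
represented by natural numbers -/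
noncomputable def GBow (G : CFG N T) (ws : List (List T)) : CFG (NI N) ℕ :=
  ⟨iota ws '' DeltaI G ws⟩

end Paper

namespace Paper

variable {N A : Type}

/-- `Ξ̂`: nonterminals producing some word starting with `a₁` and some word ending
with `a_d` -/
def XiHat (G : CFG N A) (a1 ad : A) : Set N :=
  {Y | (∃ w ∈ Lang G Y, ∃ v, w = a1 :: v) ∧ (∃ w ∈ Lang G Y, ∃ v, w = v ++ [ad])}

/-- the grammar `G^♯` (here `S = Ξ̂`, and `Ξ̌` is its complement) -/
def GSharp (G : CFG N A) (S : Set N) : CFG N A :=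
  ⟨{p | p ∈ G.prods ∧ p.1 ∉ S} ∪
   {p | p ∈ G.prods ∧ p.1 ∈ S ∧ ∃ (u : Word N A) (Xr : N) (v : Word N A),
      Xr ∈ S ∧ p.2 = u ++ [Sum.inl Xr] ++ v}⟩

/-- the grammar `G_{i,w}` for a pivot production `piv` (here `S = Ξ̂`) -/
def GPivot (G : CFG N A) (S : Set N) (piv : CProd N A) : CFG N A :=
  ⟨{p | p ∈ G.prods ∧ p.1 ∉ S} ∪ {piv}⟩

/-- `G` is reduced for `X` -/
def Reduced (G : CFG N A) (X : N) : Prop :=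
  ∀ Y : N, Y ≠ X → (LKY G ⊤ X (some Y)).Nonempty ∧ (Lang G Y).Nonempty

/-- `a₁* ⋯ a_d*` (given by the list `as`) is the minimal strict letter-bounded
expression for `L_X(G)` -/
def MinimalLB (G : CFG N A) (X : N) (as : List A) : Prop :=
  Lang G X ⊆ letterLang as ∧ ∀ i < as.length, ¬ (Lang G X ⊆ letterLang (as.eraseIdx i))

/-- a symbol of `A ∪ {ε}` as a word -/
def optT (a : Option A) : Word N A := a.elim [] (fun x => [Sum.inr x])

/-- a symbol of `Ξ ∪ {ε}` as a word -/
def optN (y : Option N) : Word N A := y.elim [] (fun x => [Sum.inl x])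

/-- `y ⇒^γ u_y` is a (possibly empty) `k`-index depth-first derivation, where
`y ∈ Ξ ∪ {ε}`; for `y = ε` the derivation is empty -/
def optDFDer (H : CFG N A) (k : ℕ) (y : Option N) (γ : List (CProd N A)) : Prop :=
  match y with
  | some Y => ∃ w : List A, DFCtrlFrom H (k : ℕ∞) [Sum.inl Y] γ (tw w)
  | none => γ = []

/-- the grammar `G_k` with productions `X_i → X_{i-1} X_{i-1}` (1 ≤ i ≤ k) and `X_0 → a` -/
def Gk (k : ℕ) : CFG ℕ Unit :=
  ⟨{p | (∃ i, 1 ≤ i ∧ i ≤ k ∧ p = (i, [Sum.inl (i - 1), Sum.inl (i - 1)])) ∨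
        p = (0, [Sum.inr ()])}⟩

end Paper

namespace Paper

section Aux

set_option linter.deprecated false
set_option linter.unusedVariables false

variable {N T : Type}

/-! ### list and `tw` helpers -/

lemma tw_length (t : List T) : (tw t : Word N T).length = t.length := by simp [tw]

lemma tw_append (a b : List T) : (tw (a ++ b) : Word N T) = tw a ++ tw b := by simp [tw]

lemma tw_get_inr {t : List T} {j : ℕ} {x : N ⊕ T} (h : (tw t : Word N T)[j]? = some x) :
    ∃ a, x = Sum.inr a := by
  rw [tw, List.getElem?_map] at h
  cases hg : t[j]? with
  | none => rw [hg] at h; simp at h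
  | some a => rw [hg] at h; exact ⟨a, by simpa using h.symm⟩

lemma tw_inj {a b : List T} (h : (tw a : Word N T) = tw b) : a = b :=
  (List.map_injective_iff.2 (fun _ _ => Sum.inr.inj)) h

lemma zip_fst_snd {α β : Type*} (l : List (α × β)) :
    (l.map Prod.fst).zip (l.map Prod.snd) = l := by
  induction l with | nil => rfl | cons a t ih => simp [ih]

lemma drop_get {α : Type*} {l : List α} {n : ℕ} {a : α} (h : l[n]? = some a) :
    l.drop n = a :: l.drop (n + 1) := by
  obtain ⟨hn, hg⟩ := List.getElem?_eq_some_iff.1 h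
  rw [List.drop_eq_getElem_cons hn]
  simp [← hg, List.get_eq_getElem]

lemma get_tw_mid (t : List T) (x : N ⊕ T) (rest : Word N T) :
    (tw t ++ x :: rest)[t.length]? = some x := by
  rw [List.getElem?_append_right (by simp [tw])]
  simp [tw]

lemma get_tw_mid_right (t : List T) (x : N ⊕ T) (rest : Word N T) (i : ℕ) :
    (tw t ++ x :: rest)[t.length + 1 + i]? = rest[i]? := by
  rw [List.getElem?_append_right (by simp [tw]; omega)]
  have : t.length + 1 + i - (tw t : Word N T).length = i + 1 := by simp [tw]; omega
  rw [this]
  rfl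

lemma take_tw_mid (t : List T) (x : N ⊕ T) (rest : Word N T) :
    (tw t ++ x :: rest).take t.length = tw t := by
  rw [← tw_length (N := N) t, List.take_left]

lemma drop_tw_mid (t : List T) (x : N ⊕ T) (rest : Word N T) :
    (tw t ++ x :: rest).drop (t.length + 1) = rest := by
  have : (tw t ++ x :: rest : Word N T) = (tw t ++ [x]) ++ rest := by simp
  rw [this, show t.length + 1 = (tw t ++ [x] : Word N T).length + 0 by simp [tw],
    List.drop_length_add_append]
  rfl

lemma take_tw_mid_right (t : List T) (x : N ⊕ T) (rest : Word N T) (i : ℕ) :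
    (tw t ++ x :: rest).take (t.length + 1 + i) = tw t ++ x :: rest.take i := by
  have h1 : (tw t ++ x :: rest : Word N T) = (tw t ++ [x]) ++ rest := by simp
  rw [h1, show t.length + 1 + i = (tw t ++ [x] : Word N T).length + i by simp [tw],
    List.take_length_add_append]
  simp

lemma drop_tw_mid_right (t : List T) (x : N ⊕ T) (rest : Word N T) (i : ℕ) :
    (tw t ++ x :: rest).drop (t.length + 1 + i) = rest.drop i := by
  have h1 : (tw t ++ x :: rest : Word N T) = (tw t ++ [x]) ++ rest := by simp
  rw [h1, show t.length + 1 + i = (tw t ++ [x] : Word N T).length + i by simp [tw],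
    List.drop_length_add_append]

lemma tw_inl_inj {t w : List T} {q q' : N} {r r' : Word N T}
    (h : tw t ++ Sum.inl q :: r = tw w ++ Sum.inl q' :: r') : t = w ∧ q = q' ∧ r = r' := by
  induction t generalizing w with
  | nil =>
    cases w with
    | nil => simp [tw] at h; exact ⟨rfl, h.1, h.2⟩
    | cons b w' => simp [tw] at h
  | cons a t' ih =>
    cases w with
    | nil => simp [tw] at h
    | cons b w' =>
      simp only [tw, List.map_cons, List.cons_append, List.cons.injEq] at h
      obtain ⟨h1, h2⟩ := h
      injection h1 with hab
      obtain ⟨rfl, rfl, rfl⟩ := ih h2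
      exact ⟨by rw [hab], rfl, rfl⟩

lemma get_decomp {t : List T} {m : N} {rest : Word N T} {j : ℕ} {n : N}
    (h : (tw t ++ Sum.inl m :: rest)[j]? = some (Sum.inl n)) :
    (j = t.length ∧ m = n) ∨ (t.length < j ∧ rest[j - t.length - 1]? = some (Sum.inl n)) := by
  rcases lt_trichotomy j t.length with hj | hj | hj
  · rw [List.getElem?_append_left (by simp [tw, hj])] at h
    obtain ⟨a, ha⟩ := tw_get_inr h
    simp at ha
  · left
    refine ⟨hj, ?_⟩
    subst hj
    rw [get_tw_mid] at h
    exact (Sum.inl.inj (Option.some.inj h))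
  · right
    refine ⟨hj, ?_⟩
    have hje : j = t.length + 1 + (j - t.length - 1) := by omega
    rw [hje, get_tw_mid_right] at h
    exact h

lemma ntCount_tw (t : List T) : ntCount (tw t : Word N T) = 0 := by
  simp [ntCount, tw, List.filter_map]

lemma ntCount_append (a b : Word N T) : ntCount (a ++ b) = ntCount a + ntCount b := by
  simp [ntCount, List.filter_append]

lemma ntCount_tw_mid (t : List T) (n : N) (rest : Word N T) :
    ntCount (tw t ++ Sum.inl n :: rest) = ntCount rest + 1 := by
  rw [ntCount_append, ntCount_tw]
  simp [ntCount, List.filter_cons]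

/-! ### runs of the automaton `G^b` -/

/-- transition sequences of `G^b` -/
inductive StepsB (ws : List (List T)) : QB → List T → QB → Prop
  | nil (q : QB) : StepsB ws q [] q
  | cons {q qm q' : QB} {a : T} {t : List T} :
      ((q, [Sum.inr a, Sum.inl qm]) : CProd QB T) ∈ DeltaB ws →
      StepsB ws qm t q' → StepsB ws q (a :: t) q'

lemma deltaB_shape {ws : List (List T)} {p : CProd QB T} (h : p ∈ DeltaB ws) :
    p.2 = [] ∨ ∃ (a : T) (qm : QB), p.2 = [Sum.inr a, Sum.inl qm] := by
  rcases h with ⟨s, i, b, _, _, _, rfl⟩ | ⟨s, s', b, _, _, _, rfl⟩ | ⟨s, _, rfl⟩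
  · exact Or.inr ⟨b, _, rfl⟩
  · exact Or.inr ⟨b, _, rfl⟩
  · exact Or.inl rfl

lemma deltaB_cases {ws : List (List T)} {q q₂ : QB} {a : T}
    (h : ((q, [Sum.inr a, Sum.inl q₂]) : CProd QB T) ∈ DeltaB ws) :
    (q₂ = (q.1, q.2 + 1) ∧ q.2 + 1 < lenB ws q.1 ∧ letterB ws q.1 q.2 = some a) ∨
    (q₂.2 = 0 ∧ q.2 = lenB ws q.1 - 1 ∧ letterB ws q.1 q.2 = some a) := by
  rcases h with ⟨s, i, b, _, hlt, hlet, heq⟩ | ⟨s, s', b, hss, hs', hlet, heq⟩ | ⟨s, _, heq⟩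
  · simp only [Prod.mk.injEq, List.cons.injEq, Sum.inr.injEq, Sum.inl.injEq] at heq
    obtain ⟨rfl, ⟨rfl, rfl, -⟩⟩ := heq
    exact Or.inl ⟨rfl, hlt, hlet⟩
  · simp only [Prod.mk.injEq, List.cons.injEq, Sum.inr.injEq, Sum.inl.injEq] at heq
    obtain ⟨rfl, ⟨rfl, rfl, -⟩⟩ := heq
    exact Or.inr ⟨rfl, rfl, hlet⟩
  · simp at heq

/-! ### from `DerB` to `StepsB` -/

lemma kseq_tw_ne {G : CFG N T} {k : ℕ∞} {t : List T} {pjs} {w : List T} {q' : N}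
    {v : Word N T} (h : KSeq G k (tw t) pjs v) (hv : v = tw w ++ Sum.inl q' :: []) : False := by
  cases h with
  | refl _ _ =>
    have := congrArg (fun l => l[w.length]?) hv
    rw [get_tw_mid] at this
    obtain ⟨a, ha⟩ := tw_get_inr this
    simp at ha
  | step _ _ hget _ =>
    obtain ⟨a, ha⟩ := tw_get_inr hget
    simp at ha

lemma gb_kseq_steps {ws : List (List T)} {pjs} {u v : Word QB T}
    (h : KSeq (GB ws) ⊤ u pjs v) :
    ∀ (t : List T) (q : QB), u = tw t ++ Sum.inl q :: [] →
    ∀ (w : List T) (q' : QB), v = tw w ++ Sum.inl q' :: [] →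
    ∃ w₂, w = t ++ w₂ ∧ StepsB ws q w₂ q' := by
  induction h with
  | refl u hcnt =>
    intro t q hu w q' hv
    obtain ⟨rfl, rfl, -⟩ := tw_inl_inj (hu.symm.trans hv)
    exact ⟨[], by simp, StepsB.nil q⟩
  | @step u v p j rest hcnt hmem hget hrest ih =>
    intro t q hu w q' hv
    subst hu
    rcases get_decomp hget with ⟨rfl, hq⟩ | ⟨hlt, hg2⟩
    · -- production applied at the unique nonterminal
      obtain ⟨p1, p2⟩ := p
      simp only at hq
      subst hq
      rcases deltaB_shape hmem with h0 | ⟨b, qm, h2⟩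
      · -- ε-production: word becomes all-terminal, contradiction
        simp only at h0; subst h0
        exfalso
        have happ : applyProd (q, ([] : Word QB T)) t.length (tw t ++ Sum.inl q :: []) = tw t := by
          simp [applyProd, take_tw_mid, drop_tw_mid]
        rw [happ] at hrest
        exact kseq_tw_ne hrest hv
      · simp only at h2; subst h2
        have happ : applyProd (q, [Sum.inr b, Sum.inl qm]) t.length (tw t ++ Sum.inl q :: []) =
            tw (t ++ [b]) ++ Sum.inl qm :: [] := by
          simp [applyProd, take_tw_mid, drop_tw_mid, tw_append, tw]
        obtain ⟨w₂, hw, hs⟩ := ih (t ++ [b]) qm happ w q' hv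
        exact ⟨b :: w₂, by simp [hw], StepsB.cons hmem hs⟩
    · -- no position beyond the nonterminal
      exfalso
      have hje : j = t.length + 1 + (j - t.length - 1) := by omega
      rw [hje, get_tw_mid_right] at hget
      simp at hget

lemma derB_steps {ws : List (List T)} {q q' : QB} {w : List T} (h : DerB ws q w q') :
    StepsB ws q w q' := by
  obtain ⟨γ, js, _, hk⟩ := h
  obtain ⟨w₂, hw, hs⟩ := gb_kseq_steps hk [] q (by simp [tw]) w q' rfl
  rw [show w₂ = w by simp [hw]] at hs
  exact hs

lemma stepsB_nil {ws : List (List T)} {q q' : QB} (h : StepsB ws q [] q') : q = q' := by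
  cases h; rfl

lemma stepsB_one {ws : List (List T)} {q q' : QB} {a : T} (h : StepsB ws q [a] q') :
    ((q, [Sum.inr a, Sum.inl q']) : CProd QB T) ∈ DeltaB ws := by
  cases h with
  | cons hp hs => rwa [stepsB_nil hs] at hp

lemma stepsB_two {ws : List (List T)} {q q' : QB} {a b : T} (h : StepsB ws q [a, b] q') :
    ∃ qm : QB, ((q, [Sum.inr a, Sum.inl qm]) : CProd QB T) ∈ DeltaB ws ∧
      ((qm, [Sum.inr b, Sum.inl q']) : CProd QB T) ∈ DeltaB ws := by
  cases h with
  | cons hp hs => exact ⟨_, hp, stepsB_one hs⟩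

/-! ### runs with emission of completed blocks -/

/-- a run of `G^b` reading `t`, recording in `e` the blocks completed by its
jump transitions -/
inductive Run (ws : List (List T)) : QB → List T → List ℕ → QB → Prop
  | nil (q : QB) : Run ws q [] [] q
  | nonjump {q q₂ q' : QB} {a : T} {t : List T} {e : List ℕ} :
      ((q, [Sum.inr a, Sum.inl q₂]) : CProd QB T) ∈ DeltaB ws → q₂.2 ≠ 0 →
      Run ws q₂ t e q' → Run ws q (a :: t) e q'
  | jump {q q₂ q' : QB} {a : T} {t : List T} {e : List ℕ} :
      ((q, [Sum.inr a, Sum.inl q₂]) : CProd QB T) ∈ DeltaB ws → q₂.2 = 0 →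
      Run ws q₂ t e q' → Run ws q (a :: t) (q.1 :: e) q'

lemma Run.append {ws : List (List T)} {q qm q' : QB} {t₁ t₂ : List T} {e₁ e₂ : List ℕ}
    (h1 : Run ws q t₁ e₁ qm) : Run ws qm t₂ e₂ q' →
    Run ws q (t₁ ++ t₂) (e₁ ++ e₂) q' := by
  induction h1 with
  | nil => exact fun h2 => h2
  | nonjump hp hn _ ih => exact fun h2 => Run.nonjump hp hn (ih h2)
  | jump hp hz _ ih => exact fun h2 => Run.jump hp hz (ih h2)

lemma run_pos {ws : List (List T)} {q q' : QB} {t : List T} {e : List ℕ}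
    (h : Run ws q t e q') (he : e = []) : q'.1 = q.1 ∧ q'.2 = q.2 + t.length := by
  induction h with
  | nil => simp
  | @nonjump q q₂ q' a t e hp hn _ ih =>
    obtain ⟨h1, h2⟩ := ih he
    rcases deltaB_cases hp with ⟨rfl, -, -⟩ | ⟨hz, -⟩
    · refine ⟨h1, ?_⟩
      simp only [h2]
      simp
      omega
    · exact absurd hz hn
  | jump => simp at he

lemma run_reconstruct {ws : List (List T)} {q q' : QB} {t : List T} {e : List ℕ}
    (h : Run ws q t e q') (hq' : q'.2 = 0) :
    (e = [] ∧ t = []) ∨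
    ∃ e', e = q.1 :: e' ∧
      t = (ws.getD q.1 []).drop q.2 ++ (e'.map (fun c => ws.getD c [])).flatten := by
  induction h with
  | nil => exact Or.inl ⟨rfl, rfl⟩
  | @nonjump q q₂ q' a t e hp hnz hr ih =>
    rcases deltaB_cases hp with ⟨hq2, hlt, hlet⟩ | ⟨hz, -⟩
    swap
    · exact absurd hz hnz
    rcases ih hq' with ⟨rfl, rfl⟩ | ⟨e', rfl, ht⟩
    · exfalso
      have := (run_pos hr rfl).2
      rw [hq2] at this
      simp at this
      omega
    · right
      refine ⟨e', by rw [hq2], ?_⟩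
      have hdrop : (ws.getD q.1 []).drop q.2 = a :: (ws.getD q.1 []).drop (q.2 + 1) :=
        drop_get hlet
      rw [ht, hq2, hdrop]
      simp
  | @jump q q₂ q' a t e hp hz hr ih =>
    rcases deltaB_cases hp with ⟨hq2, hlt, hlet⟩ | ⟨-, hqlen, hlet⟩
    · exfalso
      rw [hq2] at hz
      simp at hz
    have hqlt : q.2 < (ws.getD q.1 []).length := (List.getElem?_eq_some_iff.1 hlet).1
    have hdropa : (ws.getD q.1 []).drop q.2 = [a] := by
      rw [drop_get hlet]
      have : q.2 + 1 = (ws.getD q.1 []).length := by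
        have : lenB ws q.1 = (ws.getD q.1 []).length := rfl
        omega
      rw [this, List.drop_length]
    rcases ih hq' with ⟨rfl, rfl⟩ | ⟨e'', rfl, ht⟩
    · exact Or.inr ⟨[], rfl, by
        simp only [List.map_nil, List.flatten_nil, List.append_nil, hdropa]⟩
    · right
      refine ⟨q₂.1 :: e'', rfl, ?_⟩
      rw [ht, hz, hdropa]
      simp

lemma run_join {ws : List (List T)} {s x : ℕ} {t : List T} {e : List ℕ}
    (h : Run ws (s, 0) t e (x, 0)) :
    t = (e.map (fun c => ws.getD c [])).flatten := by
  rcases run_reconstruct h rfl with ⟨rfl, rfl⟩ | ⟨e', rfl, ht⟩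
  · rfl
  · rw [ht]; simp

/-! ### the simulation relation between sentential forms of `G^∩` and `G^⋈` -/

/-- `Pair ws q u u' q₂` : `u` and `u'` have the same nonterminal skeleton, the
terminal segments of `u` are connected by runs of `G^b` along the state chain of
the nonterminals, and the corresponding segments of `u'` record the emitted
(completed) blocks of those runs. -/
inductive Pair (ws : List (List T)) : QB → Word (NI N) T → Word (NI N) ℕ → QB → Prop
  | base {q q' : QB} {t : List T} {e : List ℕ} :
      Run ws q t e q' → Pair ws q (tw t) (tw e) q'
  | cons {q q1 q1' q₂ : QB} {Y : N} {t : List T} {e : List ℕ}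
      {u : Word (NI N) T} {u' : Word (NI N) ℕ} :
      Run ws q t e q1 → Pair ws q1' u u' q₂ →
      Pair ws q (tw t ++ Sum.inl ((q1, Y, q1') : NI N) :: u)
        (tw e ++ Sum.inl ((q1, Y, q1') : NI N) :: u') q₂

lemma pair_ntCount {ws : List (List T)} {q q₂ : QB} {u : Word (NI N) T}
    {u' : Word (NI N) ℕ} (h : Pair ws q u u' q₂) : ntCount u = ntCount u' := by
  induction h with
  | base _ => rw [ntCount_tw, ntCount_tw]
  | cons _ _ ih => rw [ntCount_tw_mid, ntCount_tw_mid, ih]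

lemma pair_prepend {ws : List (List T)} {q q1 q₂ : QB} {t : List T} {e : List ℕ}
    (hr : Run ws q t e q1) {u : Word (NI N) T} {u' : Word (NI N) ℕ}
    (hp : Pair ws q1 u u' q₂) : Pair ws q (tw t ++ u) (tw e ++ u') q₂ := by
  cases hp with
  | base hr2 => rw [← tw_append, ← tw_append]; exact Pair.base (hr.append hr2)
  | @cons _ qa qa' _ Y t₂ e₂ u₁ u₁' hr2 hp2 =>
    rw [show tw t ++ (tw t₂ ++ Sum.inl ((qa, Y, qa') : NI N) :: u₁) =
          tw (t ++ t₂) ++ Sum.inl ((qa, Y, qa') : NI N) :: u₁ by rw [tw_append]; simp,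
        show tw e ++ (tw e₂ ++ Sum.inl ((qa, Y, qa') : NI N) :: u₁') =
          tw (e ++ e₂) ++ Sum.inl ((qa, Y, qa') : NI N) :: u₁' by rw [tw_append]; simp]
    exact Pair.cons (hr.append hr2) hp2

lemma pair_append {ws : List (List T)} {q qm q₂ : QB} {r u : Word (NI N) T}
    {r' u' : Word (NI N) ℕ} (h1 : Pair ws q r r' qm) :
    Pair ws qm u u' q₂ → Pair ws q (r ++ u) (r' ++ u') q₂ := by
  induction h1 with
  | base hr => exact fun h2 => pair_prepend hr h2
  | @cons _ qa qa' _ Y t₂ e₂ u₁ u₁' hr hp ih =>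
    intro h2
    have := Pair.cons (ws := ws) (Y := Y) hr (ih h2)
    simpa [List.append_assoc] using this

lemma pair_split_right {ws : List (List T)} {q q₂ : QB} {u : Word (NI N) T}
    {u' : Word (NI N) ℕ} (h : Pair ws q u u' q₂) :
    ∀ (j : ℕ) (nt : NI N), u'[j]? = some (Sum.inl nt) →
      ∃ j₂, u[j₂]? = some (Sum.inl nt) ∧
        ∀ (r : Word (NI N) T) (r' : Word (NI N) ℕ), Pair ws nt.1 r r' nt.2.2 →
          Pair ws q (u.take j₂ ++ r ++ u.drop (j₂ + 1))
            (u'.take j ++ r' ++ u'.drop (j + 1)) q₂ := by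
  induction h with
  | base hr =>
    intro j nt hj
    obtain ⟨a, ha⟩ := tw_get_inr hj
    simp at ha
  | @cons qq q1 q1' qq₂ Y t e u₁ u₁' hr hp ih =>
    intro j nt hj
    rcases get_decomp hj with ⟨rfl, rfl⟩ | ⟨hlt, hj'⟩
    · refine ⟨t.length, get_tw_mid t _ u₁, ?_⟩
      intro r r' hPr
      rw [take_tw_mid, drop_tw_mid, take_tw_mid, drop_tw_mid]
      have := pair_prepend hr (pair_append hPr hp)
      simpa [List.append_assoc] using this
    · obtain ⟨j₂₀, hg, hrep⟩ := ih (j - e.length - 1) nt hj'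
      refine ⟨t.length + 1 + j₂₀, by rw [get_tw_mid_right]; exact hg, ?_⟩
      intro r r' hPr
      have hje : j = e.length + 1 + (j - e.length - 1) := by omega
      rw [hje, take_tw_mid_right,
        show e.length + 1 + (j - e.length - 1) + 1 = e.length + 1 + (j - e.length - 1 + 1) by omega,
        drop_tw_mid_right, take_tw_mid_right,
        show t.length + 1 + j₂₀ + 1 = t.length + 1 + (j₂₀ + 1) by omega,
        drop_tw_mid_right]
      have := Pair.cons (ws := ws) (Y := Y) hr (hrep r r' hPr)
      simpa [List.append_assoc] using this

lemma pair_split_left {ws : List (List T)} {q q₂ : QB} {u : Word (NI N) T}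
    {u' : Word (NI N) ℕ} (h : Pair ws q u u' q₂) :
    ∀ (j : ℕ) (nt : NI N), u[j]? = some (Sum.inl nt) →
      ∃ j₂, u'[j₂]? = some (Sum.inl nt) ∧
        ∀ (r : Word (NI N) T) (r' : Word (NI N) ℕ), Pair ws nt.1 r r' nt.2.2 →
          Pair ws q (u.take j ++ r ++ u.drop (j + 1))
            (u'.take j₂ ++ r' ++ u'.drop (j₂ + 1)) q₂ := by
  induction h with
  | base hr =>
    intro j nt hj
    obtain ⟨a, ha⟩ := tw_get_inr hj
    simp at ha
  | @cons qq q1 q1' qq₂ Y t e u₁ u₁' hr hp ih =>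
    intro j nt hj
    rcases get_decomp hj with ⟨rfl, rfl⟩ | ⟨hlt, hj'⟩
    · refine ⟨e.length, get_tw_mid e _ u₁', ?_⟩
      intro r r' hPr
      rw [take_tw_mid, drop_tw_mid, take_tw_mid, drop_tw_mid]
      have := pair_prepend hr (pair_append hPr hp)
      simpa [List.append_assoc] using this
    · obtain ⟨j₂₀, hg, hrep⟩ := ih (j - t.length - 1) nt hj'
      refine ⟨e.length + 1 + j₂₀, by rw [get_tw_mid_right]; exact hg, ?_⟩
      intro r r' hPr
      have hje : j = t.length + 1 + (j - t.length - 1) := by omega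
      rw [hje, take_tw_mid_right,
        show t.length + 1 + (j - t.length - 1) + 1 = t.length + 1 + (j - t.length - 1 + 1) by omega,
        drop_tw_mid_right, take_tw_mid_right,
        show e.length + 1 + j₂₀ + 1 = e.length + 1 + (j₂₀ + 1) by omega,
        drop_tw_mid_right]
      have := Pair.cons (ws := ws) (Y := Y) hr (hrep r r' hPr)
      simpa [List.append_assoc] using this

lemma pair_tw_left {ws : List (List T)} {q q₂ : QB} {u : Word (NI N) T}
    {u' : Word (NI N) ℕ} (h : Pair ws q u u' q₂) :
    ∀ t : List T, u = tw t → ∃ e, u' = tw e ∧ Run ws q t e q₂ := by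
  cases h with
  | base hr =>
    intro t ht
    obtain rfl := tw_inj ht.symm
    exact ⟨_, rfl, hr⟩
  | @cons _ qa qa' _ Y t₂ e₂ u₁ u₁' hr hp =>
    intro t ht
    exfalso
    have h1 := get_tw_mid t₂ (Sum.inl ((qa, Y, qa') : NI N)) u₁
    rw [ht] at h1
    obtain ⟨a, ha⟩ := tw_get_inr h1
    simp at ha

lemma pair_tw_right {ws : List (List T)} {q q₂ : QB} {u : Word (NI N) T}
    {u' : Word (NI N) ℕ} (h : Pair ws q u u' q₂) :
    ∀ e : List ℕ, u' = tw e → ∃ t, u = tw t ∧ Run ws q t e q₂ := by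
  cases h with
  | base hr =>
    intro e he
    obtain rfl := tw_inj he.symm
    exact ⟨_, rfl, hr⟩
  | @cons _ qa qa' _ Y t₂ e₂ u₁ u₁' hr hp =>
    intro e he
    exfalso
    have h1 := get_tw_mid e₂ (Sum.inl ((qa, Y, qa') : NI N)) u₁'
    rw [he] at h1
    obtain ⟨a, ha⟩ := tw_get_inr h1
    simp at ha

/-! ### productions of `G^∩` are `Pair`-related to their `ι`-images -/

lemma prod_pair {G : CFG N T} (h2NF : TwoNF G) {ws : List (List T)} {p : CProd (NI N) T}
    (hp : p ∈ DeltaI G ws) :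
    Pair ws p.1.1 p.2 (iotaRhs ws p.1 p.2) p.1.2.2 := by
  obtain ⟨q, q', X, hvalid, hc⟩ := hp
  rcases hc with ⟨w, hw, hder, rfl⟩ | ⟨Y, hY, rfl⟩ | ⟨a, Y, qm, hG, hB, hv, rfl⟩ |
    ⟨a, Y, qm, hG, hB, hv, rfl⟩ | ⟨Y, Z, qm, hG, hv1, hv2, rfl⟩
  · -- terminal production
    show Pair ws q (tw w) (iotaRhs ws ((q, X, q') : NI N) (tw w)) q'
    have hlen : w.length ≤ 2 := by
      have := h2NF _ hw
      simpa [tw] using this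
    have hsteps := derB_steps hder
    rcases w with _ | ⟨a, _ | ⟨b, _ | ⟨c, w⟩⟩⟩
    · -- w = []
      obtain rfl := stepsB_nil hsteps
      exact Pair.base (Run.nil q)
    · -- w = [a]
      have hstep := stepsB_one hsteps
      by_cases hz : q'.2 = 0
      · have hrun : Run ws q [a] [q.1] q' := Run.jump hstep hz (Run.nil q')
        have := Pair.base (N := N) hrun
        simpa [iotaRhs, tw, hz] using this
      · have hrun : Run ws q [a] [] q' := Run.nonjump hstep hz (Run.nil q')
        have := Pair.base (N := N) hrun
        simpa [iotaRhs, tw, hz] using this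
    · -- w = [a, b]
      obtain ⟨qm, h1, h2⟩ := stepsB_two hsteps
      by_cases hc2 : q.2 + 1 < lenB ws q.1
      · have hqm : qm = (q.1, q.2 + 1) := by
          rcases deltaB_cases h1 with ⟨h, -, -⟩ | ⟨-, hql, -⟩
          · exact h
          · exfalso; omega
        subst hqm
        have hmid : iotaMid ws ((q, X, q') : NI N) a b = (q.1, q.2 + 1) := by
          simp [iotaMid, hc2]
        by_cases hz : q'.2 = 0
        · have hrun : Run ws q [a, b] [q.1] q' :=
            Run.nonjump h1 (by simp) (Run.jump h2 hz (Run.nil q'))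
          have := Pair.base (N := N) hrun
          simpa [iotaRhs, hmid, tw, hz] using this
        · have hrun : Run ws q [a, b] [] q' :=
            Run.nonjump h1 (by simp) (Run.nonjump h2 hz (Run.nil q'))
          have := Pair.base (N := N) hrun
          simpa [iotaRhs, hmid, tw, hz] using this
      · obtain ⟨qm1, qm2⟩ := qm
        have hqm2 : qm2 = 0 := by
          rcases deltaB_cases h1 with ⟨-, hlt, -⟩ | ⟨h, -, -⟩
          · exact absurd hlt hc2
          · exact h
        subst hqm2
        have hinf := Nat.sInf_mem (s := {y : ℕ |
            (((q.1, q.2), [Sum.inr a, Sum.inl ((y, 0) : QB)]) : CProd QB T) ∈ DeltaB ws ∧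
            ((((y, 0) : QB), [Sum.inr b, Sum.inl q']) : CProd QB T) ∈ DeltaB ws})
          ⟨qm1, by simpa using h1, by simpa using h2⟩
        obtain ⟨hm1, hm2⟩ := hinf
        simp only [Prod.mk.eta] at hm1
        have hmid : iotaMid ws ((q, X, q') : NI N) a b =
            ((sInf {y : ℕ |
            (((q.1, q.2), [Sum.inr a, Sum.inl ((y, 0) : QB)]) : CProd QB T) ∈ DeltaB ws ∧
            ((((y, 0) : QB), [Sum.inr b, Sum.inl q']) : CProd QB T) ∈ DeltaB ws}, 0) : QB) := by
          simp [iotaMid, hc2]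
        by_cases hz : q'.2 = 0
        · have hrun : Run ws q [a, b] [q.1, sInf {y : ℕ |
              (((q.1, q.2), [Sum.inr a, Sum.inl ((y, 0) : QB)]) : CProd QB T) ∈ DeltaB ws ∧
              ((((y, 0) : QB), [Sum.inr b, Sum.inl q']) : CProd QB T) ∈ DeltaB ws}] q' :=
            Run.jump hm1 rfl (Run.jump hm2 hz (Run.nil q'))
          have := Pair.base (N := N) hrun
          simpa [iotaRhs, hmid, tw, hz] using this
        · have hrun : Run ws q [a, b] [q.1] q' :=
            Run.jump hm1 rfl (Run.nonjump hm2 hz (Run.nil q'))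
          have := Pair.base (N := N) hrun
          simpa [iotaRhs, hmid, tw, hz] using this
    · -- |w| ≥ 3 impossible
      exfalso
      simp at hlen
  · -- chain production
    show Pair ws q [Sum.inl ((q, Y, q') : NI N)]
      (iotaRhs ws ((q, X, q') : NI N) [Sum.inl ((q, Y, q') : NI N)]) q'
    have hiota : iotaRhs ws ((q, X, q') : NI N) [Sum.inl ((q, Y, q') : NI N)] =
        [Sum.inl ((q, Y, q') : NI N)] := rfl
    rw [hiota]
    have := Pair.cons (ws := ws) (Y := Y) (Run.nil q) (Pair.base (N := N) (Run.nil q'))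
    simpa [tw] using this
  · -- right-linear production
    show Pair ws q [Sum.inr a, Sum.inl ((qm, Y, q') : NI N)]
      (iotaRhs ws ((q, X, q') : NI N) [Sum.inr a, Sum.inl ((qm, Y, q') : NI N)]) q'
    have hiota : iotaRhs ws ((q, X, q') : NI N) [Sum.inr a, Sum.inl ((qm, Y, q') : NI N)] =
        (if qm.2 = 0 then [Sum.inr q.1] else []) ++ [Sum.inl ((qm, Y, q') : NI N)] := rfl
    rw [hiota]
    by_cases hz : qm.2 = 0
    · have hrun : Run ws q [a] [q.1] qm := Run.jump hB hz (Run.nil qm)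
      have := Pair.cons (ws := ws) (Y := Y) hrun (Pair.base (N := N) (Run.nil q'))
      simpa [tw, hz] using this
    · have hrun : Run ws q [a] [] qm := Run.nonjump hB hz (Run.nil qm)
      have := Pair.cons (ws := ws) (Y := Y) hrun (Pair.base (N := N) (Run.nil q'))
      simpa [tw, hz] using this
  · -- left-linear production
    show Pair ws q [Sum.inl ((q, Y, qm) : NI N), Sum.inr a]
      (iotaRhs ws ((q, X, q') : NI N) [Sum.inl ((q, Y, qm) : NI N), Sum.inr a]) q'
    have hiota : iotaRhs ws ((q, X, q') : NI N) [Sum.inl ((q, Y, qm) : NI N), Sum.inr a] =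
        [Sum.inl ((q, Y, qm) : NI N)] ++ (if q'.2 = 0 then [Sum.inr qm.1] else []) := rfl
    rw [hiota]
    by_cases hz : q'.2 = 0
    · have hrun : Run ws qm [a] [qm.1] q' := Run.jump hB hz (Run.nil q')
      have := Pair.cons (ws := ws) (Y := Y) (Run.nil q) (Pair.base (N := N) hrun)
      simpa [tw, hz] using this
    · have hrun : Run ws qm [a] [] q' := Run.nonjump hB hz (Run.nil q')
      have := Pair.cons (ws := ws) (Y := Y) (Run.nil q) (Pair.base (N := N) hrun)
      simpa [tw, hz] using this
  · -- binary production
    show Pair ws q [Sum.inl ((q, Y, qm) : NI N), Sum.inl ((qm, Z, q') : NI N)]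
      (iotaRhs ws ((q, X, q') : NI N)
        [Sum.inl ((q, Y, qm) : NI N), Sum.inl ((qm, Z, q') : NI N)]) q'
    have hiota : iotaRhs ws ((q, X, q') : NI N)
        [Sum.inl ((q, Y, qm) : NI N), Sum.inl ((qm, Z, q') : NI N)] =
        [Sum.inl ((q, Y, qm) : NI N), Sum.inl ((qm, Z, q') : NI N)] := rfl
    rw [hiota]
    have := Pair.cons (ws := ws) (Y := Y) (Run.nil q)
      (Pair.cons (ws := ws) (Y := Z) (Run.nil qm) (Pair.base (N := N) (Run.nil q')))
    simpa [tw] using this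

/-! ### the two simulations -/

lemma sim_forward {G : CFG N T} (h2NF : TwoNF G) {ws : List (List T)} {k : ℕ∞}
    {u0 v0 : Word (NI N) T} {pjs : List (CProd (NI N) T × ℕ)}
    (h : KSeq (GI G ws) k u0 pjs v0) :
    ∀ (q q₂ : QB) (u' : Word (NI N) ℕ), Pair ws q u0 u' q₂ →
      ∃ (pjs' : List (CProd (NI N) ℕ × ℕ)) (v' : Word (NI N) ℕ),
        KSeq (GBow G ws) k u' pjs' v' ∧ Pair ws q v0 v' q₂ := by
  induction h with
  | refl u hu =>
    intro q q₂ u' hP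
    exact ⟨[], u', KSeq.refl u' (by rw [← pair_ntCount hP]; exact hu), hP⟩
  | @step u v p j rest hcnt hmem hget hrest ih =>
    intro q q₂ u' hP
    obtain ⟨j', hget', hrep⟩ := pair_split_left hP j p.1 hget
    have hP2 := hrep p.2 (iotaRhs ws p.1 p.2) (prod_pair h2NF hmem)
    obtain ⟨pjs', v', hK, hPv⟩ := ih q q₂ _ hP2
    refine ⟨(iota ws p, j') :: pjs', v', KSeq.step ?_ ⟨p, hmem, rfl⟩ hget' hK, hPv⟩
    rw [← pair_ntCount hP]; exact hcnt

lemma sim_backward {G : CFG N T} (h2NF : TwoNF G) {ws : List (List T)}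
    {u0' v0' : Word (NI N) ℕ} {pjs : List (CProd (NI N) ℕ × ℕ)}
    (h : KSeq (GBow G ws) ⊤ u0' pjs v0') :
    ∀ (q q₂ : QB) (u : Word (NI N) T), Pair ws q u u0' q₂ →
      ∃ (δjs : List (CProd (NI N) T × ℕ)) (v : Word (NI N) T),
        KSeq (GI G ws) ⊤ u δjs v ∧
        δjs.map (fun x => iota ws x.1) = pjs.map Prod.fst ∧ Pair ws q v v0' q₂ := by
  induction h with
  | refl u' hu =>
    intro q q₂ u hP
    exact ⟨[], u, KSeq.refl u le_top, rfl, hP⟩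
  | @step u' v' p' j rest hcnt hmem hget hrest ih =>
    intro q q₂ u hP
    obtain ⟨p, hpD, rfl⟩ := hmem
    obtain ⟨j₂, hget2, hrep⟩ := pair_split_right hP j (iota ws p).1 hget
    have hP2 := hrep p.2 (iota ws p).2 (prod_pair h2NF hpD)
    obtain ⟨δjs, v, hK, hmap, hPv⟩ := ih q q₂ _ hP2
    exact ⟨(p, j₂) :: δjs, v, KSeq.step le_top hpD hget2 hK, by simp [hmap], hPv⟩

end Aux

/-- Lemma 7 (2): any control set `Γ` covering
`L^{(k)}_{[q^{(s)}₁ X q^{(x)}₁]}(G^⋈)` transfers through `ι⁻¹` to a control set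
covering `L^{(k)}_{[q^{(s)}₁ X q^{(x)}₁]}(G^∩)`. -/
theorem control_set_transfer {N T : Type} (G : CFG N T) (h2NF : TwoNF G)
    (ws : List (List T)) (hb : IsBExpr ws)
    (X : N) (s x : ℕ) (hsx : s ≤ x) (hx : x < ws.length) (k : ℕ) (hk : 0 < k)
    (Γ : Set (List (CProd (NI N) ℕ)))
    (hcov : LangK (GBow G ws) k (((s, 0), X, (x, 0)) : NI N) ⊆
        LHat (GBow G ws) Γ (((s, 0), X, (x, 0)) : NI N) none) :
    LangK (GI G ws) k (((s, 0), X, (x, 0)) : NI N) ⊆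
      LHat (GI G ws) {δ | δ.map (iota ws) ∈ Γ} (((s, 0), X, (x, 0)) : NI N) none := by
  intro w hw
  obtain ⟨u, v, γ0, hw_eq, js0, hlen0, hK0⟩ := hw
  subst hw_eq
  have hsent : sent u (none : Option (NI N)) v = tw (u ++ v) := by
    simp [sent, tw, Option.elim]
  rw [hsent] at hK0
  have hP0 : Pair ws (s, 0) ([Sum.inl (((s, 0), X, (x, 0)) : NI N)] : Word (NI N) T)
      ([Sum.inl (((s, 0), X, (x, 0)) : NI N)] : Word (NI N) ℕ) (x, 0) := by
    have := Pair.cons (ws := ws) (Y := X) (Run.nil ((s, 0) : QB))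
      (Pair.base (N := N) (Run.nil ((x, 0) : QB)))
    simpa [tw] using this
  obtain ⟨pjs', v', hK', hP'⟩ := sim_forward h2NF hK0 (s, 0) (x, 0) _ hP0
  obtain ⟨wA, rfl, hRunW⟩ := pair_tw_left hP' (u ++ v) rfl
  have hwA : wA ∈ LangK (GBow G ws) k (((s, 0), X, (x, 0)) : NI N) := by
    refine ⟨wA, [], pjs'.map Prod.fst, by simp, pjs'.map Prod.snd, by simp, ?_⟩
    rw [zip_fst_snd]
    have hsent2 : sent wA (none : Option (NI N)) [] = tw wA := by
      simp [sent, tw, Option.elim]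
    rw [hsent2]
    exact hK'
  obtain ⟨u₂, v₂, he2, γ, hγΓ, js₂, hlen₂, hK₂⟩ := hcov hwA
  have hsent3 : sent u₂ (none : Option (NI N)) v₂ = tw wA := by
    rw [show wA = u₂ ++ v₂ from he2]
    simp [sent, tw, Option.elim]
  rw [hsent3] at hK₂
  obtain ⟨δjs, v₃, hK₃, hmap, hP₃⟩ := sim_backward h2NF hK₂ (s, 0) (x, 0) _ hP0
  obtain ⟨t₃, rfl, hRun₃⟩ := pair_tw_right hP₃ wA rfl
  have ht₃ : t₃ = u ++ v := (run_join hRun₃).trans (run_join hRunW).symm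
  rw [ht₃] at hK₃
  refine ⟨u ++ v, [], by simp, δjs.map Prod.fst, ?_, δjs.map Prod.snd, by simp, ?_⟩
  · show (δjs.map Prod.fst).map (iota ws) ∈ Γ
    rw [List.map_map]
    have hcomp : (iota ws) ∘ (Prod.fst : CProd (NI N) T × ℕ → CProd (NI N) T) =
        fun x : CProd (NI N) T × ℕ => iota ws x.1 := rfl
    rw [hcomp, hmap, List.map_fst_zip (le_of_eq hlen₂.symm)]
    exact hγΓ
  · rw [zip_fst_snd]
    have hsent4 : sent (u ++ v) (none : Option (NI N)) [] = tw (u ++ v) := by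
      simp [sent, tw, Option.elim]
    rw [hsent4]
    exact hK₃

end Paper
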